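/- Let (X, d) be a metric space with at least three points, u = underline(d), and d⁻ the pseudometric on X defined by d⁻(x, x) = 0 and d⁻(x, y) = d(x, y) − u(x) − u(y) for x ≠ y. Then the map Φ(g) = g + u (i.e., Φ(g)(x) = g(x) + u(x)) is a bijection from T(X, d⁻) onto the set {f ∈ T(X, d) : f(x) ≥ u(x) for all x ∈ X}, and it preserves the sup-distance: d_T(Φ(g), Φ(h)) = d_T(g, h) for all g, h ∈ T(X, d⁻). -/

import Mathlib

open scoped Classical

/-- The Gromov product `d(x; y, z) = (d(x,y) + d(x,z) - d(y,z))/2`. -/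
noncomputable def gromov {X : Type*} (d : X → X → ℝ) (x y z : X) : ℝ :=
  (d x y + d x z - d y z) / 2

/-- `underline d x` is the infimum of the Gromov products `d(x; y, z)` over all
pairs of distinct points `y, z` different from `x`. -/
noncomputable def underline {X : Type*} (d : X → X → ℝ) (x : X) : ℝ :=
  sInf {r : ℝ | ∃ y z : X, y ≠ x ∧ z ≠ x ∧ y ≠ z ∧ r = gromov d x y z}

/-- The drifted map `d_δ`: `d_δ(x,x) = 0` and `d_δ(x,y) = d(x,y) - δ(x) - δ(y)` for `x ≠ y`. -/
noncomputable def drift {X : Type*} (d : X → X → ℝ) (δ : X → ℝ) (x y : X) : ℝ :=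
  if x = y then 0 else d x y - δ x - δ y

/-- The tight span of a pseudometric `d` on `X`. -/
def TightSpan {X : Type*} (d : X → X → ℝ) : Set (X → ℝ) :=
  {f | (∀ x, 0 ≤ f x) ∧ (∀ x y, d x y ≤ f x + f y) ∧
    ∀ x, ∀ ε : ℝ, 0 < ε → ∃ y, f x + f y ≤ d x y + ε}

/-- The sup-distance on the tight span: `dT f g = sup_x |f x - g x|`. -/
noncomputable def dT {X : Type*} (f g : X → ℝ) : ℝ :=
  ⨆ x, |f x - g x|

section Aux

variable {X : Type*} [MetricSpace X]

lemma gromov_nonneg' (x y z : X) : 0 ≤ gromov (fun a b => dist a b) x y z := by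
  have h := dist_triangle y x z
  have h2 := dist_comm y x
  unfold gromov
  simp only
  linarith

lemma exists_third (h3 : ∃ a b c : X, a ≠ b ∧ a ≠ c ∧ b ≠ c) (x y : X) :
    ∃ z : X, z ≠ x ∧ z ≠ y := by
  obtain ⟨a, b, c, hab, hac, hbc⟩ := h3
  by_cases hax : a = x
  · subst hax
    by_cases hby : b = y
    · subst hby
      exact ⟨c, hac.symm, hbc.symm⟩
    · exact ⟨b, hab.symm, hby⟩
  · by_cases hay : a = y
    · subst hay
      by_cases hbx : b = x
      · subst hbx
        exact ⟨c, hbc.symm, hac.symm⟩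
      · exact ⟨b, hbx, hab.symm⟩
    · exact ⟨a, hax, hay⟩

lemma exists_two (h3 : ∃ a b c : X, a ≠ b ∧ a ≠ c ∧ b ≠ c) (x : X) :
    ∃ y z : X, y ≠ x ∧ z ≠ x ∧ y ≠ z := by
  obtain ⟨y, hy, _⟩ := exists_third h3 x x
  obtain ⟨z, hz1, hz2⟩ := exists_third h3 x y
  exact ⟨z, y, hz1, hy, hz2⟩

lemma underline_bdd (x : X) :
    BddBelow {r : ℝ | ∃ y z : X, y ≠ x ∧ z ≠ x ∧ y ≠ z ∧
      r = gromov (fun a b => dist a b) x y z} := by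
  refine ⟨0, ?_⟩
  rintro r ⟨y, z, _, _, _, rfl⟩
  exact gromov_nonneg' x y z

lemma underline_nonneg (h3 : ∃ a b c : X, a ≠ b ∧ a ≠ c ∧ b ≠ c) (x : X) :
    0 ≤ underline (fun a b => dist a b) x := by
  unfold underline
  apply le_csInf
  · obtain ⟨y, z, hy, hz, hyz⟩ := exists_two h3 x
    exact ⟨_, y, z, hy, hz, hyz, rfl⟩
  · rintro r ⟨y, z, _, _, _, rfl⟩
    exact gromov_nonneg' x y z

lemma underline_le (x y z : X) (hy : y ≠ x) (hz : z ≠ x) (hyz : y ≠ z) :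
    underline (fun a b => dist a b) x ≤ gromov (fun a b => dist a b) x y z :=
  csInf_le (underline_bdd x) ⟨y, z, hy, hz, hyz, rfl⟩

lemma underline_add_le (h3 : ∃ a b c : X, a ≠ b ∧ a ≠ c ∧ b ≠ c)
    {x y : X} (hxy : x ≠ y) :
    underline (fun a b => dist a b) x + underline (fun a b => dist a b) y
      ≤ dist x y := by
  obtain ⟨z, hzx, hzy⟩ := exists_third h3 x y
  have h1 := underline_le x y z hxy.symm hzx (Ne.symm hzy)
  have h2 := underline_le y x z hxy hzy (Ne.symm hzx)
  have e1 := dist_comm y x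
  unfold gromov at h1 h2
  simp only at h1 h2
  linarith

lemma drift_nonneg (h3 : ∃ a b c : X, a ≠ b ∧ a ≠ c ∧ b ≠ c) (x y : X) :
    0 ≤ drift (fun a b => dist a b) (underline (fun a b => dist a b)) x y := by
  unfold drift
  by_cases hxy : x = y
  · simp [hxy]
  · rw [if_neg hxy]
    have := underline_add_le h3 hxy
    linarith

lemma drift_symm (x y : X) :
    drift (fun a b => dist a b) (underline (fun a b => dist a b)) x y
      = drift (fun a b => dist a b) (underline (fun a b => dist a b)) y x := by
  unfold drift
  by_cases hxy : x = y
  · subst hxy; simp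
  · rw [if_neg hxy, if_neg (Ne.symm hxy)]
    simp only
    rw [dist_comm]
    ring

lemma drift_self (x : X) :
    drift (fun a b => dist a b) (underline (fun a b => dist a b)) x x = 0 := by
  rw [drift, if_pos rfl]

lemma drift_triangle (h3 : ∃ a b c : X, a ≠ b ∧ a ≠ c ∧ b ≠ c) (x y z : X) :
    drift (fun a b => dist a b) (underline (fun a b => dist a b)) x z
      ≤ drift (fun a b => dist a b) (underline (fun a b => dist a b)) x y
        + drift (fun a b => dist a b) (underline (fun a b => dist a b)) y z := by
  by_cases hxz : x = z
  · rw [drift, if_pos hxz]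
    have := drift_nonneg h3 x y
    have := drift_nonneg h3 y z
    linarith
  by_cases hxy : x = y
  · subst hxy
    rw [drift_self]
    linarith
  by_cases hyz : y = z
  · subst hyz
    rw [drift_self]
    linarith
  · have hg := underline_le y x z hxy (Ne.symm hyz) hxz
    unfold gromov at hg
    simp only at hg
    have e1 := dist_comm y x
    unfold drift
    rw [if_neg hxz, if_neg hxy, if_neg hyz]
    simp only
    linarith

lemma tight_lipschitz (h3 : ∃ a b c : X, a ≠ b ∧ a ≠ c ∧ b ≠ c)
    {g : X → ℝ}
    (hg : g ∈ TightSpan (drift (fun a b => dist a b)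
      (underline (fun a b => dist a b)))) (x p : X) :
    g p ≤ g x + drift (fun a b => dist a b) (underline (fun a b => dist a b)) x p := by
  apply le_of_forall_pos_le_add
  intro ε hε
  obtain ⟨r, hr⟩ := hg.2.2 p ε hε
  have h1 := hg.2.1 x r
  have h2 := drift_triangle h3 p x r
  have h4 := drift_symm p x
  linarith

end Aux

theorem stmt16 {X : Type*} [MetricSpace X]
    (h3 : ∃ a b c : X, a ≠ b ∧ a ≠ c ∧ b ≠ c)
    (u : X → ℝ) (hu : u = underline (fun a b => dist a b))
    (dminus : X → X → ℝ) (hdminus : dminus = drift (fun a b => dist a b) u) :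
    (∀ g ∈ TightSpan dminus,
        (fun x => g x + u x) ∈ TightSpan (fun a b : X => dist a b) ∧
        ∀ x, u x ≤ g x + u x) ∧
    (∀ g ∈ TightSpan dminus, ∀ h ∈ TightSpan dminus,
        (fun x => g x + u x) = (fun x => h x + u x) → g = h) ∧
    (∀ f ∈ TightSpan (fun a b : X => dist a b), (∀ x, u x ≤ f x) →
        ∃ g ∈ TightSpan dminus, f = fun x => g x + u x) ∧
    (∀ g ∈ TightSpan dminus, ∀ h ∈ TightSpan dminus,
        dT (fun x => g x + u x) (fun x => h x + u x) = dT g h) := by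
  subst hu hdminus
  set d : X → X → ℝ := fun a b => dist a b with hd
  set u : X → ℝ := underline d with hu
  refine ⟨?_, ?_, ?_, ?_⟩
  · -- forward membership
    rintro g ⟨hg0, hg1, hg2⟩
    constructor
    · refine ⟨?_, ?_, ?_⟩
      · intro x
        have := underline_nonneg h3 x
        have := hg0 x
        simp only
        linarith
      · intro x y
        by_cases hxy : x = y
        · subst hxy
          have := hg0 x
          have := underline_nonneg h3 x
          simp only [hd, dist_self]
          linarith
        · have h := hg1 x y
          rw [drift, if_neg hxy] at h
          simp only at h ⊢
          linarith
      · intro x ε hε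
        obtain ⟨y, hy⟩ := hg2 x ε hε
        by_cases hxy : y = x
        · subst hxy
          rw [drift, if_pos rfl] at hy
          -- g y ≤ ε / 2
          obtain ⟨p, hp, -⟩ := exists_third h3 y y
          refine ⟨p, ?_⟩
          have hl := tight_lipschitz h3 ⟨hg0, hg1, hg2⟩ y p
          rw [drift, if_neg (Ne.symm hp)] at hl
          simp only at hl ⊢
          linarith
        · refine ⟨y, ?_⟩
          rw [drift, if_neg (fun h => hxy h.symm)] at hy
          simp only at hy ⊢
          linarith
    · intro x
      have := hg0 x
      linarith
  · -- injectivity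
    rintro g - h - heq
    funext x
    have := congrFun heq x
    linarith
  · -- surjectivity
    rintro f ⟨hf0, hf1, hf2⟩ hfu
    refine ⟨fun x => f x - u x, ⟨?_, ?_, ?_⟩, ?_⟩
    · intro x
      have := hfu x
      simp only
      linarith
    · intro x y
      by_cases hxy : x = y
      · subst hxy
        rw [drift, if_pos rfl]
        have := hfu x
        simp only
        linarith
      · rw [drift, if_neg hxy]
        have := hf1 x y
        simp only at this ⊢
        linarith
    · intro x ε hε
      obtain ⟨y, hy⟩ := hf2 x ε hε
      by_cases hxy : x = y
      · subst hxy
        refine ⟨x, ?_⟩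
        rw [drift, if_pos rfl]
        have h0 := underline_nonneg h3 x
        simp only [hd, dist_self] at hy
        simp only
        linarith
      · refine ⟨y, ?_⟩
        rw [drift, if_neg hxy]
        simp only at hy ⊢
        linarith
    · funext x
      ring
  · -- isometry
    rintro g - h -
    unfold dT
    congr 1
    funext x
    congr 1
    ring
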